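/- arXiv:2409.12802 — 2 statements merged into one kernel-verified Lean document; each statement's English description precedes it below -/
import Mathlib

section
/- Let λ ∈ 𝔥* and let V be a highest weight 𝔤-module with highest weight λ. For every μ ∈ wt_{J_λ} V and every tuple (c_i)_{i ∈ J_λ^c} of nonnegative integers, one has μ − Σ_{i∈J_λ^c} c_i α_i ∈ wt V. More precisely: if F ∈ U(n⁻) is a weight vector with 0 ≠ F·v_λ ∈ V_μ, then F·(∏_{i∈J_λ^c} f_i^{c_i})·v_λ ≠ 0 in V, where the product of the f_i^{c_i} is taken in any fixed order. -/
open scoped BigOperators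

attribute [local instance] Classical.propDecidable

namespace KM

/-- The set of `ℤ≥0`-linear combinations of elements of `S`. -/
def cone {W : Type} [AddCommMonoid W] (S : Set W) : Set W :=
  (AddSubmonoid.closure S : AddSubmonoid W)

/-- Minkowski difference of two sets. -/
def mdiff {W : Type} [Sub W] (A B : Set W) : Set W :=
  {x | ∃ a ∈ A, ∃ b ∈ B, x = a - b}

variable {g : Type} [LieRing g] [LieAlgebra ℂ g]

/-- The `μ`-weight space of a `g`-module `V` with respect to a Cartan subalgebra `H`. -/
def wtSpace (H : LieSubalgebra ℂ g) (V : Type) [AddCommGroup V] [Module ℂ V]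
    [LieRingModule g V] [LieModule ℂ g V] (μ : Module.Dual ℂ H) : Submodule ℂ V where
  carrier := {w | ∀ h : H, ⁅(h : g), w⁆ = μ h • w}
  add_mem' := by
    intro a b ha hb h
    rw [lie_add, ha h, hb h, smul_add]
  zero_mem' := by
    intro h
    rw [lie_zero, smul_zero]
  smul_mem' := by
    intro t w hw h
    rw [lie_smul, hw h, smul_smul, smul_smul, mul_comm]

/-- The set of weights of a `g`-module `V`. -/
def wtSet (H : LieSubalgebra ℂ g) (V : Type) [AddCommGroup V] [Module ℂ V]
    [LieRingModule g V] [LieModule ℂ g V] : Set (Module.Dual ℂ H) :=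
  {μ | wtSpace H V μ ≠ ⊥}

/-- Iterated action `x^n · w` of an element `x : g` on a module vector. -/
def actPow {V : Type} [AddCommGroup V] [LieRingModule g V] (x : g) (n : ℕ) (w : V) : V :=
  (fun u => ⁅x, u⁆)^[n] w

/-- The data of a Kac--Moody Lie algebra `g` attached to a generalized Cartan matrix `A`,
with Cartan subalgebra `H`, simple roots `α`, simple coroots `coroot`, and Chevalley
generators `e`, `f`. -/
structure Data (𝓘 : Type) (g : Type) [LieRing g] [LieAlgebra ℂ g] where
  H : LieSubalgebra ℂ g
  α : 𝓘 → Module.Dual ℂ H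
  coroot : 𝓘 → H
  e : 𝓘 → g
  f : 𝓘 → g
  A : 𝓘 → 𝓘 → ℤ
  pairing_eq : ∀ i j, α i (coroot j) = (A j i : ℂ)
  A_diag : ∀ i, A i i = 2
  A_offdiag : ∀ i j, i ≠ j → A i j ≤ 0
  A_zero_iff : ∀ i j, A i j = 0 ↔ A j i = 0
  indepSimple : LinearIndependent ℂ α
  cartan_abelian : ∀ h h' : H, ⁅(h : g), (h' : g)⁆ = 0
  lie_h_e : ∀ (h : H) (i : 𝓘), ⁅(h : g), e i⁆ = α i h • e i
  lie_h_f : ∀ (h : H) (i : 𝓘), ⁅(h : g), f i⁆ = -(α i h) • f i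
  lie_e_f_same : ∀ i, ⁅e i, f i⁆ = (coroot i : g)
  lie_e_f_ne : ∀ i j, i ≠ j → ⁅e i, f j⁆ = 0
  serre_e : ∀ i j, i ≠ j → ((LieAlgebra.ad ℂ g (e i)) ^ (1 - A i j).toNat) (e j) = 0
  serre_f : ∀ i j, i ≠ j → ((LieAlgebra.ad ℂ g (f i)) ^ (1 - A i j).toNat) (f j) = 0
  generates : LieSubalgebra.lieSpan ℂ g ((H : Set g) ∪ Set.range e ∪ Set.range f) = ⊤
  rootDecomp : (⨆ μ : Module.Dual ℂ H, wtSpace H g μ) = ⊤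
  zeroWtSpace : wtSpace H g (0 : Module.Dual ℂ H) = H.toSubmodule
  root_pm : ∀ μ : Module.Dual ℂ H, μ ≠ 0 → wtSpace H g μ ≠ ⊥ →
      μ ∈ cone (Set.range α) ∨ -μ ∈ cone (Set.range α)

variable {𝓘 : Type}

/-- `V` is a highest weight `g`-module with highest weight `lam` and highest weight
vector `v`; equivalently, `V` is a nonzero quotient of the Verma module `M(lam)`. -/
def IsHW (D : Data 𝓘 g) (V : Type) [AddCommGroup V] [Module ℂ V] [LieRingModule g V]
    [LieModule ℂ g V] (lam : Module.Dual ℂ D.H) (v : V) : Prop :=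
  v ≠ 0 ∧ v ∈ wtSpace D.H V lam ∧ (∀ i : 𝓘, ⁅D.e i, v⁆ = 0) ∧
    LieSubmodule.lieSpan ℂ g {v} = ⊤

/-- `J_λ`, the set of integrable directions of `lam`. -/
def Jlam (D : Data 𝓘 g) (lam : Module.Dual ℂ D.H) : Set 𝓘 :=
  {i | ∃ n : ℕ, lam (D.coroot i) = (n : ℂ)}

/-- `Π_J`, the simple roots indexed by `J`. -/
def PiJ (D : Data 𝓘 g) (J : Set 𝓘) : Set (Module.Dual ℂ D.H) := D.α '' J

/-- The root system `Δ` of `g`. -/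
def roots (D : Data 𝓘 g) : Set (Module.Dual ℂ D.H) :=
  {μ | μ ≠ 0 ∧ wtSpace D.H g μ ≠ ⊥}

/-- The positive roots `Δ⁺`. -/
def posRoots (D : Data 𝓘 g) : Set (Module.Dual ℂ D.H) :=
  roots D ∩ cone (Set.range D.α)

/-- The positive roots `Δ⁺_J` of the parabolic subroot system `Δ_J = Δ ∩ ℤΠ_J`. -/
def posRootsJ (D : Data 𝓘 g) (J : Set 𝓘) : Set (Module.Dual ℂ D.H) :=
  posRoots D ∩ (Submodule.span ℤ (D.α '' J) : Set (Module.Dual ℂ D.H))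

/-- `wt_J V := wt V ∩ (λ − ℤ≥0 Π_J)`. -/
def wtJ (D : Data 𝓘 g) (V : Type) [AddCommGroup V] [Module ℂ V] [LieRingModule g V]
    [LieModule ℂ g V] (lam : Module.Dual ℂ D.H) (J : Set 𝓘) : Set (Module.Dual ℂ D.H) :=
  wtSet D.H V ∩ {μ | ∃ x ∈ cone (PiJ D J), μ = lam - x}

/-- A subset `S` of nodes is independent if its induced Dynkin subdiagram has no edges. -/
def IndepSet (D : Data 𝓘 g) (S : Set 𝓘) : Prop :=
  ∀ i ∈ S, ∀ j ∈ S, i ≠ j → D.α i (D.coroot j) = 0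

/-- `J_V`: the union of all minimal independent subsets `I ⊆ J_λ` with
`λ − Σ_{i∈I} (λ(α_i^∨)+1)α_i ∉ wt V`. -/
def JV (D : Data 𝓘 g) (V : Type) [AddCommGroup V] [Module ℂ V] [LieRingModule g V]
    [LieModule ℂ g V] (lam : Module.Dual ℂ D.H) : Set 𝓘 :=
  {i | ∃ I : Finset 𝓘, (↑I : Set 𝓘) ⊆ Jlam D lam ∧ IndepSet D (↑I : Set 𝓘) ∧
    (lam - ∑ k ∈ I, (lam (D.coroot k) + 1) • D.α k) ∉ wtSet D.H V ∧
    (∀ K : Finset 𝓘, K ⊂ I →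
      (lam - ∑ k ∈ K, (lam (D.coroot k) + 1) • D.α k) ∈ wtSet D.H V) ∧
    i ∈ I}


/-- The action of the universal enveloping algebra `U(g)` on a `g`-module `V`. -/
noncomputable def Uact (g : Type) [LieRing g] [LieAlgebra ℂ g] (V : Type)
    [AddCommGroup V] [Module ℂ V] [LieRingModule g V] [LieModule ℂ g V] :
    UniversalEnvelopingAlgebra ℂ g →ₐ[ℂ] Module.End ℂ V :=
  UniversalEnvelopingAlgebra.lift ℂ (LieModule.toEnd ℂ g V)

/-- Finitely many nonzero functionals over `ℂ` admit a common non-vanishing point. -/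
lemma exists_sep {H : Type*} [AddCommGroup H] [Module ℂ H]
    (Φ : Finset (Module.Dual ℂ H)) (hΦ : ∀ φ ∈ Φ, φ ≠ 0) :
    ∃ h : H, ∀ φ ∈ Φ, φ h ≠ 0 := by
  classical
  induction Φ using Finset.induction_on with
  | empty => exact ⟨0, by simp⟩
  | @insert φ Φ hφΦ ih =>
    obtain ⟨h, hh⟩ := ih (fun ψ hψ => hΦ ψ (Finset.mem_insert_of_mem hψ))
    have hφ : φ ≠ 0 := hΦ φ (Finset.mem_insert_self _ _)
    by_cases hc : φ h ≠ 0
    · exact ⟨h, fun ψ hψ => by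
        rcases Finset.mem_insert.1 hψ with rfl | hψ
        · exact hc
        · exact hh ψ hψ⟩
    push_neg at hc
    obtain ⟨h', hh'⟩ : ∃ x, φ x ≠ 0 := by
      by_contra hcon
      push_neg at hcon
      exact hφ (LinearMap.ext fun x => hcon x)
    obtain ⟨t, ht⟩ := Infinite.exists_notMem_finset
      (insert (0:ℂ) (Φ.image fun ψ => -(ψ h) / (ψ h')))
    refine ⟨h + t • h', fun ψ hψ => ?_⟩
    rcases Finset.mem_insert.1 hψ with rfl | hψ
    · simp only [map_add, map_smul, hc, zero_add, smul_eq_mul]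
      exact mul_ne_zero (fun h0 => ht (by simp [h0])) hh'
    · intro h0
      simp only [map_add, map_smul, smul_eq_mul] at h0
      by_cases hz : ψ h' = 0
      · rw [hz, mul_zero, add_zero] at h0
        exact hh ψ hψ h0
      · apply ht
        apply Finset.mem_insert_of_mem
        refine Finset.mem_image.2 ⟨ψ, hψ, ?_⟩
        rw [div_eq_iff hz]
        linear_combination -h0

/-- If `F` lies in the span of eigenvectors of `D` and is itself an eigenvector with
eigenvalue `c`, then `F` lies in the span of those eigenvectors with eigenvalue `c`. -/
lemma span_filter_eig {M : Type*} [AddCommGroup M] [Module ℂ M]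
    (Dop : Module.End ℂ M) (w : M → ℂ) (c : ℂ) :
    ∀ (n : ℕ) (T : Finset M), (T.filter fun m => w m ≠ c).card ≤ n →
    (∀ m ∈ T, Dop m = w m • m) → ∀ F, F ∈ Submodule.span ℂ (T : Set M) →
    Dop F = c • F →
    F ∈ Submodule.span ℂ ((T.filter fun m => w m = c : Finset M) : Set M) := by
  classical
  intro n
  induction n with
  | zero =>
    intro T hcard hw F hF hD
    have hall : ∀ m ∈ T, w m = c := by
      intro m hm
      by_contra hmc
      have : m ∈ T.filter fun m => w m ≠ c := Finset.mem_filter.2 ⟨hm, hmc⟩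
      have h0 : (T.filter fun m => w m ≠ c) = ∅ :=
        Finset.card_eq_zero.1 (Nat.le_zero.1 hcard)
      rw [h0] at this
      exact absurd this (Finset.notMem_empty m)
    rwa [Finset.filter_true_of_mem hall]
  | succ n ih =>
    intro T hcard hw F hF hD
    by_cases hall : ∀ m ∈ T, w m = c
    · rwa [Finset.filter_true_of_mem hall]
    push_neg at hall
    obtain ⟨m0, hm0T, hm0⟩ := hall
    set a := w m0 with ha
    have hac : a ≠ c := hm0
    set L : Module.End ℂ M := Dop - a • 1 with hL
    set T' : Finset M := T.filter fun m => w m ≠ a with hT'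
    have h1 : (Submodule.span ℂ (T : Set M)).map L ≤ Submodule.span ℂ (T' : Set M) := by
      rw [Submodule.map_span, Submodule.span_le]
      rintro _ ⟨m, hm, rfl⟩
      have hm' : m ∈ T := hm
      have hLm : L m = (w m - a) • m := by
        simp only [hL, LinearMap.sub_apply, LinearMap.smul_apply, Module.End.one_apply,
          hw m hm', sub_smul]
      rw [SetLike.mem_coe, hLm]
      by_cases hma : w m = a
      · rw [hma, sub_self, zero_smul]; exact Submodule.zero_mem _
      · exact Submodule.smul_mem _ _
          (Submodule.subset_span (Finset.mem_coe.2 (Finset.mem_filter.2 ⟨hm', hma⟩)))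
    have hLF : L F ∈ Submodule.span ℂ (T' : Set M) :=
      h1 (Submodule.mem_map_of_mem hF)
    have hLF2 : L F = (c - a) • F := by
      simp only [hL, LinearMap.sub_apply, LinearMap.smul_apply, Module.End.one_apply,
        hD, sub_smul]
    have hne : (c - a) ≠ 0 := sub_ne_zero.2 (Ne.symm hac)
    have hF' : F ∈ Submodule.span ℂ (T' : Set M) := by
      have hEq : F = (c - a)⁻¹ • ((c - a) • F) := by
        rw [smul_smul, inv_mul_cancel₀ hne, one_smul]
      rw [hEq, ← hLF2]
      exact Submodule.smul_mem _ _ hLF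
    have hm0f : m0 ∈ T.filter fun m => w m ≠ c := Finset.mem_filter.2 ⟨hm0T, hm0⟩
    have hcard' : (T'.filter fun m => w m ≠ c).card ≤ n := by
      have hsub : (T'.filter fun m => w m ≠ c) ⊆ (T.filter fun m => w m ≠ c).erase m0 := by
        intro m hm
        have h1m := Finset.mem_filter.1 hm
        have h2m := Finset.mem_filter.1 h1m.1
        refine Finset.mem_erase.2 ⟨?_, Finset.mem_filter.2 ⟨h2m.1, h1m.2⟩⟩
        intro hEq
        exact h2m.2 (by rw [hEq])
      calc (T'.filter fun m => w m ≠ c).card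
          ≤ ((T.filter fun m => w m ≠ c).erase m0).card := Finset.card_le_card hsub
        _ = (T.filter fun m => w m ≠ c).card - 1 := Finset.card_erase_of_mem hm0f
        _ ≤ n := by omega
    have hres := ih T' hcard' (fun m hm => hw m (Finset.mem_filter.1 hm).1) F hF' hD
    refine Submodule.span_mono ?_ hres
    intro m hm
    have h1m := Finset.mem_filter.1 (Finset.mem_coe.1 hm)
    exact Finset.mem_coe.2
      (Finset.mem_filter.2 ⟨(Finset.mem_filter.1 h1m.1).1, h1m.2⟩)


section Helpers

variable {𝓘 : Type} {g : Type} [LieRing g] [LieAlgebra ℂ g]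

local notation "ιU" => UniversalEnvelopingAlgebra.ι ℂ

lemma iota_lie (x y : g) :
    ιU ⁅x, y⁆ = ιU x * ιU y - ιU y * ιU x := by
  letI : LieRing (UniversalEnvelopingAlgebra ℂ g) := LieRing.ofAssociativeRing
  rw [LieHom.map_lie, Ring.lie_def]

lemma uact_iota (V : Type) [AddCommGroup V] [Module ℂ V] [LieRingModule g V]
    [LieModule ℂ g V] (x : g) (w : V) : Uact g V (ιU x) w = ⁅x, w⁆ := by
  rw [Uact, UniversalEnvelopingAlgebra.lift_ι_apply]
  rfl

lemma mem_wtSpace {H : LieSubalgebra ℂ g} {V : Type} [AddCommGroup V] [Module ℂ V]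
    [LieRingModule g V] [LieModule ℂ g V] {μ : Module.Dual ℂ H} {w : V} :
    w ∈ wtSpace H V μ ↔ ∀ h : H, ⁅(h : g), w⁆ = μ h • w := Iff.rfl

/-- `X ∈ U(g)` is a weight vector of weight `ν` for the adjoint `H`-action. -/
def IsWt (D : Data 𝓘 g) (X : UniversalEnvelopingAlgebra ℂ g)
    (ν : Module.Dual ℂ D.H) : Prop :=
  ∀ h : D.H, ιU (h : g) * X = X * ιU (h : g) + ν h • X

lemma isWt_one (D : Data 𝓘 g) : IsWt D 1 0 := by
  intro h; simp

lemma isWt_mul {D : Data 𝓘 g} {X Y : UniversalEnvelopingAlgebra ℂ g}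
    {ν ξ : Module.Dual ℂ D.H} (hX : IsWt D X ν) (hY : IsWt D Y ξ) :
    IsWt D (X * Y) (ν + ξ) := by
  intro h
  calc ιU (h : g) * (X * Y) = (ιU (h : g) * X) * Y := by rw [mul_assoc]
    _ = X * (ιU (h : g) * Y) + ν h • (X * Y) := by
        rw [hX h, add_mul, smul_mul_assoc, mul_assoc]
    _ = X * Y * ιU (h : g) + (ν + ξ) h • (X * Y) := by
        rw [hY h, mul_add, mul_smul_comm, LinearMap.add_apply, add_smul, mul_assoc,
          add_assoc]
        abel

lemma isWt_f (D : Data 𝓘 g) (i : 𝓘) : IsWt D (ιU (D.f i)) (-D.α i) := by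
  intro h
  have h1 := iota_lie (h : g) (D.f i)
  rw [D.lie_h_f h i, map_smul] at h1
  have : (-(D.α i)) h • ιU (D.f i) = ιU (h : g) * ιU (D.f i) - ιU (D.f i) * ιU (h : g) := by
    simpa using h1
  rw [this]; abel

/-- The monomial `f_{l_1} ⋯ f_{l_k}` in `U(g)`. -/
noncomputable def fmon (D : Data 𝓘 g) (l : List 𝓘) : UniversalEnvelopingAlgebra ℂ g :=
  (l.map fun j => ιU (D.f j)).prod

/-- The weight of the monomial `fmon D l`. -/
def lwt (D : Data 𝓘 g) (l : List 𝓘) : Module.Dual ℂ D.H := -(l.map D.α).sum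

lemma fmon_nil (D : Data 𝓘 g) : fmon D ([] : List 𝓘) = 1 := rfl

lemma fmon_cons (D : Data 𝓘 g) (j : 𝓘) (l : List 𝓘) :
    fmon D (j :: l) = ιU (D.f j) * fmon D l := by
  simp [fmon]

lemma fmon_append (D : Data 𝓘 g) (l l' : List 𝓘) :
    fmon D (l ++ l') = fmon D l * fmon D l' := by
  simp [fmon]

lemma lwt_nil (D : Data 𝓘 g) : lwt D ([] : List 𝓘) = 0 := by simp [lwt]

lemma lwt_cons (D : Data 𝓘 g) (j : 𝓘) (l : List 𝓘) :
    lwt D (j :: l) = -D.α j + lwt D l := by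
  simp [lwt]; abel

lemma lwt_append (D : Data 𝓘 g) (l l' : List 𝓘) :
    lwt D (l ++ l') = lwt D l + lwt D l' := by
  simp [lwt]; abel

lemma isWt_fmon (D : Data 𝓘 g) (l : List 𝓘) : IsWt D (fmon D l) (lwt D l) := by
  induction l with
  | nil => rw [fmon_nil, lwt_nil]; exact isWt_one D
  | cons j l ih =>
    rw [fmon_cons, lwt_cons]
    exact isWt_mul (isWt_f D j) ih

lemma act_wt {D : Data 𝓘 g} (V : Type) [AddCommGroup V] [Module ℂ V]
    [LieRingModule g V] [LieModule ℂ g V]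
    {X : UniversalEnvelopingAlgebra ℂ g} {ν : Module.Dual ℂ D.H} (hX : IsWt D X ν)
    {w : V} {ξ : Module.Dual ℂ D.H} (hw : w ∈ wtSpace D.H V ξ) :
    Uact g V X w ∈ wtSpace D.H V (ξ + ν) := by
  intro h
  have hw' := hw h
  calc ⁅(h : g), Uact g V X w⁆ = Uact g V (ιU (h : g) * X) w := by
        rw [map_mul, Module.End.mul_apply, uact_iota]
    _ = Uact g V X ⁅(h : g), w⁆ + ν h • Uact g V X w := by
        rw [hX h, map_add, map_smul, LinearMap.add_apply, LinearMap.smul_apply,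
          map_mul, Module.End.mul_apply, uact_iota]
    _ = (ξ + ν) h • Uact g V X w := by
        rw [hw', LinearMap.map_smul, LinearMap.add_apply, add_smul]

lemma commute_e_f (D : Data 𝓘 g) {i j : 𝓘} (hij : i ≠ j) :
    Commute (ιU (D.e i)) (ιU (D.f j)) := by
  have := iota_lie (D.e i) (D.f j)
  rw [D.lie_e_f_ne i j hij, map_zero] at this
  exact (commute_iff_eq _ _).2 (sub_eq_zero.1 this.symm)

lemma commute_e_fmon (D : Data 𝓘 g) {i : 𝓘} {l : List 𝓘} (hl : ∀ j ∈ l, j ≠ i) :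
    Commute (ιU (D.e i)) (fmon D l) := by
  induction l with
  | nil => rw [fmon_nil]; exact Commute.one_right _
  | cons j l ih =>
    rw [fmon_cons]
    exact (commute_e_f D fun hEq => (hl j (List.mem_cons_self)) hEq.symm).mul_right
      (ih fun k hk => hl k (List.mem_cons_of_mem j hk))

section SL2

variable {D : Data 𝓘 g} {V : Type} [AddCommGroup V] [Module ℂ V]
  [LieRingModule g V] [LieModule ℂ g V]

lemma actPow_wt {lam : Module.Dual ℂ D.H} {v : V} (hv : v ∈ wtSpace D.H V lam)
    (i : 𝓘) (n : ℕ) (h : D.H) :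
    ⁅(h : g), actPow (D.f i) n v⁆ = (lam h - n * D.α i h) • actPow (D.f i) n v := by
  induction n with
  | zero => simpa [actPow] using hv h
  | succ n ih =>
    have hstep : actPow (D.f i) (n + 1) v = ⁅D.f i, actPow (D.f i) n v⁆ := by
      simp [actPow, Function.iterate_succ_apply']
    rw [hstep, leibniz_lie, D.lie_h_f h i, smul_lie, ih, lie_smul]
    push_cast
    module

lemma act_pow_f (i : 𝓘) (n : ℕ) (v : V) :
    Uact g V (UniversalEnvelopingAlgebra.ι ℂ (D.f i) ^ n) v = actPow (D.f i) n v := by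
  induction n with
  | zero => simp [actPow]
  | succ n ih =>
    rw [pow_succ', map_mul, Module.End.mul_apply, ih, uact_iota]
    simp [actPow, Function.iterate_succ_apply']

lemma e_actPow {lam : Module.Dual ℂ D.H} {v : V} (hv : v ∈ wtSpace D.H V lam)
    (i : 𝓘) (hev : ⁅D.e i, v⁆ = 0) (n : ℕ) :
    ⁅D.e i, actPow (D.f i) (n + 1) v⁆
      = (((n : ℂ) + 1) * (lam (D.coroot i) - n)) • actPow (D.f i) n v := by
  have hai : D.α i (D.coroot i) = 2 := by
    rw [D.pairing_eq i i, D.A_diag i]; norm_num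
  induction n with
  | zero =>
    have hstep : actPow (D.f i) 1 v = ⁅D.f i, v⁆ := by
      simp [actPow]
    rw [hstep, leibniz_lie, D.lie_e_f_same i, hev, lie_zero, add_zero, hv (D.coroot i)]
    norm_num [actPow]
  | succ n ih =>
    have hstep : actPow (D.f i) (n + 2) v = ⁅D.f i, actPow (D.f i) (n + 1) v⁆ := by
      simp [actPow, Function.iterate_succ_apply']
    have hstep' : actPow (D.f i) (n + 1) v = ⁅D.f i, actPow (D.f i) n v⁆ := by
      simp [actPow, Function.iterate_succ_apply']
    rw [hstep, leibniz_lie, D.lie_e_f_same i, ih, lie_smul,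
      actPow_wt hv i (n + 1) (D.coroot i), hai, ← hstep']
    push_cast
    module

lemma free_step {lam : Module.Dual ℂ D.H} {v : V} (hv : v ∈ wtSpace D.H V lam)
    {i : 𝓘} (hev : ⁅D.e i, v⁆ = 0) (hi : i ∉ Jlam D lam)
    (X : UniversalEnvelopingAlgebra ℂ g)
    (hcom : Commute (UniversalEnvelopingAlgebra.ι ℂ (D.e i)) X)
    (hX : Uact g V X v ≠ 0) (n : ℕ) :
    Uact g V (X * UniversalEnvelopingAlgebra.ι ℂ (D.f i) ^ n) v ≠ 0 := by
  induction n with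
  | zero => simpa using hX
  | succ n ih =>
    intro hzero
    have hz : Uact g V X (actPow (D.f i) (n + 1) v) = 0 := by
      rw [map_mul, Module.End.mul_apply, act_pow_f] at hzero
      exact hzero
    have key : Uact g V X ⁅D.e i, actPow (D.f i) (n + 1) v⁆ = 0 := by
      have h1 : Uact g V X ⁅D.e i, actPow (D.f i) (n + 1) v⁆
          = Uact g V (X * UniversalEnvelopingAlgebra.ι ℂ (D.e i))
              (actPow (D.f i) (n + 1) v) := by
        rw [map_mul, Module.End.mul_apply, uact_iota]
      rw [h1, ← hcom.eq, map_mul, Module.End.mul_apply, hz, map_zero]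
    rw [e_actPow hv i hev n, LinearMap.map_smul] at key
    have hscal : ((n : ℂ) + 1) * (lam (D.coroot i) - n) ≠ 0 := by
      apply mul_ne_zero
      · have hc1 : ((n : ℂ) + 1) = ((n + 1 : ℕ) : ℂ) := by push_cast; ring
        rw [hc1]
        exact_mod_cast Nat.succ_ne_zero n
      · intro h0
        exact hi ⟨n, by linear_combination h0⟩
    have : Uact g V X (actPow (D.f i) n v) = 0 := by
      have := smul_eq_zero.1 key
      tauto
    apply ih
    rw [map_mul, Module.End.mul_apply, act_pow_f]
    exact this

/-- The key freeness lemma: multiplying on the right by `f_i^{c_i}` over a list of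
pairwise distinct non-integrable directions preserves non-vanishing on `v`. -/
lemma free_list {lam : Module.Dual ℂ D.H} {v : V} (hv : v ∈ wtSpace D.H V lam)
    (hev : ∀ i, ⁅D.e i, v⁆ = 0) (c : 𝓘 → ℕ) :
    ∀ l : List 𝓘, l.Nodup → (∀ i ∈ l, i ∉ Jlam D lam) →
    ∀ X : UniversalEnvelopingAlgebra ℂ g,
      (∀ i ∈ l, Commute (UniversalEnvelopingAlgebra.ι ℂ (D.e i)) X) →
      Uact g V X v ≠ 0 →
      Uact g V (X * (l.map fun i => UniversalEnvelopingAlgebra.ι ℂ (D.f i) ^ c i).prod)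
        v ≠ 0 := by
  intro l
  induction l using List.reverseRecOn with
  | nil => intro _ _ X _ hX; simpa using hX
  | append_singleton l i ih =>
    intro hnd hmem X hcom hX
    have hnd' : l.Nodup := (List.nodup_append.1 hnd).1
    have hil : i ∉ l := by
      intro hc
      rcases List.nodup_append.1 hnd with ⟨_, _, hdisj⟩
      exact hdisj i hc i (List.mem_singleton_self i) rfl
    have hmem' : ∀ j ∈ l, j ∉ Jlam D lam := fun j hj =>
      hmem j (List.mem_append_left _ hj)
    have hres := ih hnd' hmem' X (fun j hj => hcom j (List.mem_append_left _ hj)) hX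
    have hcomi : Commute (UniversalEnvelopingAlgebra.ι ℂ (D.e i))
        (X * (l.map fun j => UniversalEnvelopingAlgebra.ι ℂ (D.f j) ^ c j).prod) := by
      apply (hcom i (List.mem_append_right _ (List.mem_singleton_self i))).mul_right
      apply Commute.list_prod_right
      intro Y hY
      rcases List.mem_map.1 hY with ⟨j, hj, rfl⟩
      have hji : j ≠ i := fun hEq => hil (hEq ▸ hj)
      exact (commute_e_f D fun hEq => hji hEq.symm).pow_right _
    have := free_step hv (hev i)
      (hmem i (List.mem_append_right _ (List.mem_singleton_self i)))
      _ hcomi hres (c i)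
    simpa [List.map_append, List.prod_append, mul_assoc] using this

end SL2

section Span

variable {D : Data 𝓘 g}

lemma prod_eq_fmon (D : Data 𝓘 g) :
    ∀ L : List (UniversalEnvelopingAlgebra ℂ g),
      (∀ y ∈ L, y ∈ Set.range fun k => ιU (D.f k)) →
      ∃ l : List 𝓘, L.prod = fmon D l := by
  intro L
  induction L with
  | nil => exact fun _ => ⟨[], rfl⟩
  | cons y L ih =>
    intro hmem
    obtain ⟨l, hl⟩ := ih fun z hz => hmem z (List.mem_cons_of_mem y hz)
    obtain ⟨k, hk⟩ := hmem y (List.mem_cons_self)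
    exact ⟨k :: l, by rw [List.prod_cons, hl, ← hk, fmon_cons]⟩

lemma mem_span_fmon {F : UniversalEnvelopingAlgebra ℂ g}
    (hF : F ∈ Algebra.adjoin ℂ (Set.range fun k => ιU (D.f k))) :
    F ∈ Submodule.span ℂ {X : UniversalEnvelopingAlgebra ℂ g | ∃ l : List 𝓘, X = fmon D l} := by
  have h1 : F ∈ Submodule.span ℂ
      ((Submonoid.closure (Set.range fun k => ιU (D.f k)) :
        Submonoid (UniversalEnvelopingAlgebra ℂ g)) : Set (UniversalEnvelopingAlgebra ℂ g)) := by
    rw [← Algebra.adjoin_eq_span]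
    exact hF
  refine Submodule.span_mono ?_ h1
  intro x hx
  obtain ⟨L, hL, hprod⟩ := Submonoid.exists_list_of_mem_closure hx
  obtain ⟨l, hl⟩ := prod_eq_fmon D L hL
  exact ⟨l, by rw [← hprod, hl]⟩

variable [Fintype 𝓘] [DecidableEq 𝓘]

lemma list_alpha_sum (D : Data 𝓘 g) (l : List 𝓘) :
    (l.map D.α).sum = ∑ j : 𝓘, (l.count j : ℂ) • D.α j := by
  classical
  induction l with
  | nil => simp
  | cons a l ih =>
    rw [List.map_cons, List.sum_cons, ih]
    have hsum : ∑ j : 𝓘, (((a :: l).count j : ℂ)) • D.α j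
        = ∑ j : 𝓘, ((l.count j : ℂ) • D.α j
            + (if j = a then (1 : ℂ) else 0) • D.α j) := by
      refine Finset.sum_congr rfl fun j _ => ?_
      rw [List.count_cons]
      push_cast
      rw [add_smul]
      congr 1
      by_cases hja : j = a
      · simp [hja]
      · simp [beq_iff_eq, hja, Ne.symm hja]
    rw [hsum, Finset.sum_add_distrib]
    have : ∑ j : 𝓘, (if j = a then (1 : ℂ) else 0) • D.α j = D.α a := by
      simp [ite_smul]
    rw [this]
    abel

lemma lwt_eq_neg_sum (D : Data 𝓘 g) (l : List 𝓘) :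
    lwt D l = -∑ j : 𝓘, (l.count j : ℂ) • D.α j := by
  rw [lwt, list_alpha_sum]

lemma counts_eq (D : Data 𝓘 g) {m n : 𝓘 → ℕ}
    (h : ∑ j : 𝓘, (m j : ℂ) • D.α j = ∑ j : 𝓘, (n j : ℂ) • D.α j) :
    ∀ j, m j = n j := by
  classical
  have hz : ∑ j : 𝓘, ((m j : ℂ) - (n j : ℂ)) • D.α j = 0 := by
    rw [Finset.sum_congr rfl fun j _ => sub_smul ((m j : ℂ)) ((n j : ℂ)) (D.α j),
      Finset.sum_sub_distrib, h, sub_self]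
  have := Fintype.linearIndependent_iff.1 D.indepSimple
    (fun j => (m j : ℂ) - (n j : ℂ)) hz
  intro j
  have hj := this j
  have : (m j : ℂ) = (n j : ℂ) := by linear_combination hj
  exact_mod_cast this

lemma cone_counts {J : Set 𝓘} {x : Module.Dual ℂ D.H} (hx : x ∈ cone (PiJ D J)) :
    ∃ nn : 𝓘 → ℕ, (∀ j, j ∉ J → nn j = 0) ∧ x = ∑ j : 𝓘, (nn j : ℂ) • D.α j := by
  classical
  obtain ⟨L, hL, hsum⟩ := AddSubmonoid.exists_list_of_mem_closure hx
  have : ∃ l : List 𝓘, (∀ j ∈ l, j ∈ J) ∧ (l.map D.α).sum = L.sum := by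
    clear hsum
    induction L with
    | nil => exact ⟨[], by simp, by simp⟩
    | cons y L ih =>
      obtain ⟨l, hl1, hl2⟩ := ih fun z hz => hL z (List.mem_cons_of_mem y hz)
      obtain ⟨k, hk, hky⟩ := hL y (List.mem_cons_self)
      refine ⟨k :: l, ?_, ?_⟩
      · intro j hj
        rcases List.mem_cons.1 hj with rfl | hj
        · exact hk
        · exact hl1 j hj
      · rw [List.map_cons, List.sum_cons, hl2, List.sum_cons, hky]
  obtain ⟨l, hl1, hl2⟩ := this
  refine ⟨fun j => l.count j, fun j hj => ?_, ?_⟩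
  · exact List.count_eq_zero_of_not_mem fun hc => hj (hl1 j hc)
  · rw [← hsum, ← hl2, list_alpha_sum]

/-- If `F ∈ U(n⁻)` is a weight vector whose weight is supported on `J`, then
`F` commutes with `e_i` for every `i ∉ J`. -/
lemma commute_e_of_wt (D : Data 𝓘 g) (J : Set 𝓘) {F : UniversalEnvelopingAlgebra ℂ g}
    (hF : F ∈ Algebra.adjoin ℂ (Set.range fun k => ιU (D.f k)))
    {ν : Module.Dual ℂ D.H} (hν : IsWt D F ν)
    (nn : 𝓘 → ℕ) (hnn : ∀ j, j ∉ J → nn j = 0)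
    (hνeq : ν = -∑ j : 𝓘, (nn j : ℂ) • D.α j) :
    ∀ i, i ∉ J → Commute (ιU (D.e i)) F := by
  classical
  intro i hi
  obtain ⟨T, hTsub, hTF⟩ := Submodule.mem_span_finite_of_mem_span (mem_span_fmon hF)
  set pick : UniversalEnvelopingAlgebra ℂ g → List 𝓘 := fun m =>
    if hm : ∃ l : List 𝓘, m = fmon D l then hm.choose else [] with hpick
  have hpick_eq : ∀ m ∈ T, m = fmon D (pick m) := by
    intro m hm
    have hmem : ∃ l : List 𝓘, m = fmon D l := hTsub hm
    simp only [hpick, dif_pos hmem]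
    exact hmem.choose_spec
  -- separating element
  obtain ⟨h, hsep⟩ := exists_sep
    ((T.image fun m => lwt D (pick m) - ν).filter fun φ => φ ≠ 0)
    (fun φ hφ => (Finset.mem_filter.1 hφ).2)
  set Dop : Module.End ℂ (UniversalEnvelopingAlgebra ℂ g) :=
    LinearMap.mulLeft ℂ (ιU (h : g)) - LinearMap.mulRight ℂ (ιU (h : g)) with hDop
  have hDapp : ∀ (X : UniversalEnvelopingAlgebra ℂ g),
      Dop X = ιU (h : g) * X - X * ιU (h : g) := fun X => rfl
  have hw : ∀ m ∈ T, Dop m = (fun m => lwt D (pick m) h) m • m := by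
    intro m hm
    have := isWt_fmon D (pick m) h
    rw [← hpick_eq m hm] at this
    rw [hDapp, this]
    abel
  have hDF : Dop F = ν h • F := by
    rw [hDapp, hν h]
    abel
  have hspan := span_filter_eig Dop (fun m => lwt D (pick m) h) (ν h)
    ((T.filter fun m => (fun m => lwt D (pick m) h) m ≠ ν h).card) T le_rfl hw F hTF hDF
  -- every monomial in the filtered set commutes with `e i`
  have hkey : ∀ m ∈ (T.filter fun m => (fun m => lwt D (pick m) h) m = ν h),
      Commute (ιU (D.e i)) m := by
    intro m hm
    obtain ⟨hmT, hmw⟩ := Finset.mem_filter.1 hm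
    have hlw : lwt D (pick m) = ν := by
      by_contra hne
      have hmem : lwt D (pick m) - ν ∈
          (T.image fun m => lwt D (pick m) - ν).filter fun φ => φ ≠ 0 :=
        Finset.mem_filter.2 ⟨Finset.mem_image_of_mem _ hmT, sub_ne_zero.2 hne⟩
      have := hsep _ hmem
      simp only [LinearMap.sub_apply] at this
      exact this (sub_eq_zero.2 hmw)
    have hcounts : ∀ j, (pick m).count j = nn j := by
      apply counts_eq D
      have h1 : -∑ j : 𝓘, (((pick m).count j : ℂ)) • D.α j
          = -∑ j : 𝓘, ((nn j : ℂ)) • D.α j := by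
        rw [← lwt_eq_neg_sum, hlw, hνeq]
      have := neg_injective h1
      exact this
    have hinotin : ∀ j ∈ pick m, j ≠ i := by
      intro j hj hji
      have h0 : (pick m).count j = 0 := by rw [hcounts j, hji]; exact hnn i hi
      exact (List.count_eq_zero.1 h0) hj
    rw [hpick_eq m hmT]
    exact commute_e_fmon D hinotin
  -- conclude by span induction
  have : ∀ X ∈ Submodule.span ℂ
      ((T.filter fun m => (fun m => lwt D (pick m) h) m = ν h : Finset _) :
        Set (UniversalEnvelopingAlgebra ℂ g)), Commute (ιU (D.e i)) X := by
    intro X hX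
    induction hX using Submodule.span_induction with
    | mem m hm => exact hkey m hm
    | zero => exact Commute.zero_right _
    | add a b _ _ ha hb => exact ha.add_right hb
    | smul c a _ ha => exact ha.smul_right c
  exact this F hspan

end Span

section TopSpan

variable {D : Data 𝓘 g} {V : Type} [AddCommGroup V] [Module ℂ V]
  [LieRingModule g V] [LieModule ℂ g V]

lemma wt_eq {F : UniversalEnvelopingAlgebra ℂ g} {ν : Module.Dual ℂ D.H}
    (hν : IsWt D F ν) {v : V} {lam μ : Module.Dual ℂ D.H}
    (hv : v ∈ wtSpace D.H V lam) (h0 : Uact g V F v ≠ 0)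
    (hμ : Uact g V F v ∈ wtSpace D.H V μ) : ν = μ - lam := by
  ext h
  have h1 := act_wt V hν hv h
  have h2 := hμ h
  rw [h2] at h1
  have h3 : (μ h - (lam + ν) h) • Uact g V F v = 0 := by
    rw [sub_smul, h1, sub_self]
  have h4 := (smul_eq_zero.1 h3).resolve_right h0
  simp only [LinearMap.add_apply] at h4
  simp only [LinearMap.sub_apply]
  linear_combination -h4

/-- Every vector in a highest weight module is a combination of vectors
`f_{l_1} ⋯ f_{l_k} · v`. -/
lemma span_fmon_top (lam : Module.Dual ℂ D.H) (v : V)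
    (hv : v ∈ wtSpace D.H V lam) (hev : ∀ i, ⁅D.e i, v⁆ = 0)
    (hspan : LieSubmodule.lieSpan ℂ g {v} = ⊤) (w : V) :
    w ∈ Submodule.span ℂ {w : V | ∃ l : List 𝓘, w = Uact g V (fmon D l) v} := by
  classical
  set S : Set V := {w : V | ∃ l : List 𝓘, w = Uact g V (fmon D l) v} with hS
  set W : Submodule ℂ V := Submodule.span ℂ S with hW
  have hgen : ∀ l : List 𝓘, Uact g V (fmon D l) v ∈ W :=
    fun l => Submodule.subset_span ⟨l, rfl⟩
  have hv_mem : v ∈ W := by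
    have : v = Uact g V (fmon D ([] : List 𝓘)) v := by
      rw [fmon_nil, map_one, Module.End.one_apply]
    rw [this]; exact hgen []
  have hstab : ∀ x : g, (∀ l : List 𝓘, ⁅x, Uact g V (fmon D l) v⁆ ∈ W) →
      ∀ w ∈ W, ⁅x, w⁆ ∈ W := by
    intro x hx w hw
    induction hw using Submodule.span_induction with
    | mem m hm => obtain ⟨l, rfl⟩ := hm; exact hx l
    | zero => rw [lie_zero]; exact W.zero_mem
    | add a b _ _ ha hb => rw [lie_add]; exact W.add_mem ha hb
    | smul t a _ ha => rw [lie_smul]; exact W.smul_mem t ha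
  have hfstab : ∀ j : 𝓘, ∀ w ∈ W, ⁅D.f j, w⁆ ∈ W := by
    intro j
    apply hstab
    intro l
    have : ⁅D.f j, Uact g V (fmon D l) v⁆ = Uact g V (fmon D (j :: l)) v := by
      rw [fmon_cons, map_mul, Module.End.mul_apply, uact_iota]
    rw [this]; exact hgen _
  have hhstab : ∀ h : D.H, ∀ w ∈ W, ⁅(h : g), w⁆ ∈ W := by
    intro h
    apply hstab
    intro l
    have := act_wt V (isWt_fmon D l) hv (h := h)
    rw [this]
    exact W.smul_mem _ (hgen l)
  have hestab : ∀ i : 𝓘, ∀ w ∈ W, ⁅D.e i, w⁆ ∈ W := by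
    intro i
    apply hstab
    intro l
    induction l with
    | nil =>
      have : Uact g V (fmon D ([] : List 𝓘)) v = v := by
        rw [fmon_nil, map_one, Module.End.one_apply]
      rw [this, hev i]; exact W.zero_mem
    | cons j l ih =>
      have hcons : Uact g V (fmon D (j :: l)) v = ⁅D.f j, Uact g V (fmon D l) v⁆ := by
        rw [fmon_cons, map_mul, Module.End.mul_apply, uact_iota]
      rw [hcons, leibniz_lie]
      apply W.add_mem
      · by_cases hij : i = j
        · subst hij
          rw [D.lie_e_f_same i]
          exact hhstab (D.coroot i) _ (hgen l)
        · rw [D.lie_e_f_ne i j hij, zero_lie]; exact W.zero_mem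
      · exact hfstab j _ ih
  set G : LieSubalgebra ℂ g :=
    { carrier := {x : g | ∀ w ∈ W, ⁅x, w⁆ ∈ W}
      add_mem' := fun {a b} ha hb w hw => by
        rw [add_lie]; exact W.add_mem (ha w hw) (hb w hw)
      zero_mem' := fun w hw => by rw [zero_lie]; exact W.zero_mem
      smul_mem' := fun t a ha w hw => by rw [smul_lie]; exact W.smul_mem t (ha w hw)
      lie_mem' := fun {a b} ha hb w hw => by
        rw [lie_lie]; exact W.sub_mem (ha _ (hb w hw)) (hb _ (ha w hw)) } with hG
  have hGtop : ∀ x : g, ∀ w ∈ W, ⁅x, w⁆ ∈ W := by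
    have hle : LieSubalgebra.lieSpan ℂ g ((D.H : Set g) ∪ Set.range D.e ∪ Set.range D.f)
        ≤ G := by
      rw [LieSubalgebra.lieSpan_le]
      intro x hx
      rcases hx with (hx | hx) | hx
      · exact fun w hw => hhstab ⟨x, hx⟩ w hw
      · obtain ⟨i, rfl⟩ := hx; exact hestab i
      · obtain ⟨j, rfl⟩ := hx; exact hfstab j
    intro x
    have hx : x ∈ LieSubalgebra.lieSpan ℂ g
        ((D.H : Set g) ∪ Set.range D.e ∪ Set.range D.f) := by
      rw [D.generates]
      exact LieSubalgebra.mem_top x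
    exact hle hx
  set W' : LieSubmodule ℂ g V :=
    { toSubmodule := W
      lie_mem := fun {x m} hm => hGtop x m hm } with hW'
  have htop : W' = ⊤ := by
    rw [← top_le_iff, ← hspan]
    rw [LieSubmodule.lieSpan_le]
    intro z hz
    rw [Set.mem_singleton_iff] at hz
    subst hz
    exact hv_mem
  have : w ∈ W' := by rw [htop]; exact LieSubmodule.mem_top w
  exact this

lemma pow_f_eq_fmon (D : Data 𝓘 g) (i : 𝓘) (n : ℕ) :
    ιU (D.f i) ^ n = fmon D (List.replicate n i) := by
  induction n with
  | zero => rw [pow_zero, List.replicate_zero, fmon_nil]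
  | succ n ih => rw [pow_succ', ih, List.replicate_succ, fmon_cons]

lemma prod_pow_eq_fmon (D : Data 𝓘 g) (c : 𝓘 → ℕ) (l : List 𝓘) :
    (l.map fun i => ιU (D.f i) ^ c i).prod
      = fmon D (l.flatMap fun i => List.replicate (c i) i) := by
  induction l with
  | nil => simp [fmon_nil]
  | cons j l ih =>
    rw [List.map_cons, List.prod_cons, ih, List.flatMap_cons, fmon_append,
      pow_f_eq_fmon]

lemma lwt_replicate (D : Data 𝓘 g) (i : 𝓘) (n : ℕ) :
    lwt D (List.replicate n i) = -((n : ℂ) • D.α i) := by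
  rw [lwt, List.map_replicate, List.sum_replicate, Nat.cast_smul_eq_nsmul]

lemma lwt_flatMap (D : Data 𝓘 g) (c : 𝓘 → ℕ) (l : List 𝓘) :
    lwt D (l.flatMap fun i => List.replicate (c i) i)
      = -((l.map fun i => (c i : ℂ) • D.α i).sum) := by
  induction l with
  | nil => simp [lwt_nil]
  | cons j l ih =>
    rw [List.flatMap_cons, lwt_append, ih, lwt_replicate, List.map_cons, List.sum_cons]
    abel

end TopSpan

end Helpers

set_option maxHeartbeats 2000000 in
/-- Lemma 3.2: for every `μ ∈ wt_{J_λ} V` and every tuple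
`(c_i)_{i∈J_λ^c}` of nonnegative integers, `μ − Σ_{i∈J_λ^c} c_i α_i ∈ wt V`.
More precisely, if `F ∈ U(n⁻)` is a weight vector with `0 ≠ F·v_λ ∈ V_μ`, then
`F·(∏_{i∈J_λ^c} f_i^{c_i})·v_λ ≠ 0`, the product being taken in any fixed order. -/
theorem free_directions_Jlamc_module_level
    {𝓘 : Type} [Fintype 𝓘] [DecidableEq 𝓘] {g : Type} [LieRing g] [LieAlgebra ℂ g]
    (D : Data 𝓘 g)
    (V : Type) [AddCommGroup V] [Module ℂ V] [LieRingModule g V] [LieModule ℂ g V]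
    (lam : Module.Dual ℂ D.H) (v : V) (hV : IsHW D V lam v)
    (μ : Module.Dual ℂ D.H) (hμ : μ ∈ wtJ D V lam (Jlam D lam)) (c : 𝓘 → ℕ) :
    (μ - ∑ i ∈ Finset.univ.filter (fun i => i ∉ Jlam D lam), (c i : ℂ) • D.α i
        ∈ wtSet D.H V) ∧
      (∀ F : UniversalEnvelopingAlgebra ℂ g,
        F ∈ Algebra.adjoin ℂ (Set.range fun k => UniversalEnvelopingAlgebra.ι ℂ (D.f k)) →
        (∃ ν : Module.Dual ℂ D.H, ∀ h : D.H,
          UniversalEnvelopingAlgebra.ι ℂ (h : g) * F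
              - F * UniversalEnvelopingAlgebra.ι ℂ (h : g) = ν h • F) →
        Uact g V F v ≠ 0 → Uact g V F v ∈ wtSpace D.H V μ →
        ∀ l : List 𝓘, l.Nodup → (∀ i : 𝓘, i ∈ l ↔ i ∉ Jlam D lam) →
          Uact g V
            (F * (l.map fun i => UniversalEnvelopingAlgebra.ι ℂ (D.f i) ^ (c i)).prod)
            v ≠ 0) := by
  classical
  obtain ⟨hv0, hvwt, hve, hvspan⟩ := hV
  obtain ⟨hμwt, x, hx, hμeq⟩ := hμ
  obtain ⟨nn, hnn, hxeq⟩ := cone_counts hx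
  have part2 : ∀ F : UniversalEnvelopingAlgebra ℂ g,
      F ∈ Algebra.adjoin ℂ (Set.range fun k => UniversalEnvelopingAlgebra.ι ℂ (D.f k)) →
      (∃ ν : Module.Dual ℂ D.H, ∀ h : D.H,
        UniversalEnvelopingAlgebra.ι ℂ (h : g) * F
            - F * UniversalEnvelopingAlgebra.ι ℂ (h : g) = ν h • F) →
      Uact g V F v ≠ 0 → Uact g V F v ∈ wtSpace D.H V μ →
      ∀ l : List 𝓘, l.Nodup → (∀ i : 𝓘, i ∈ l ↔ i ∉ Jlam D lam) →
        Uact g V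
          (F * (l.map fun i => UniversalEnvelopingAlgebra.ι ℂ (D.f i) ^ (c i)).prod)
          v ≠ 0 := by
    intro F hFadj hFwt hF0 hFμ l hnd hliff
    obtain ⟨ν, hν'⟩ := hFwt
    have hν : IsWt D F ν := by
      intro h
      have h2 := sub_eq_iff_eq_add.1 (hν' h)
      rw [h2]; abel
    have hνeq : ν = μ - lam := wt_eq hν hvwt hF0 hFμ
    have hνx : ν = -∑ j : 𝓘, (nn j : ℂ) • D.α j := by
      rw [hνeq, hμeq, hxeq]; abel
    have hcom := commute_e_of_wt D (Jlam D lam) hFadj hν nn hnn hνx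
    exact free_list hvwt hve c l hnd (fun i hi => (hliff i).1 hi) F
      (fun i hi => hcom i ((hliff i).1 hi)) hF0
  refine ⟨?_, part2⟩
  obtain ⟨w, hwmem, hw0⟩ := (Submodule.ne_bot_iff _).1 hμwt
  obtain ⟨T, hTsub, hTw⟩ := Submodule.mem_span_finite_of_mem_span
    (span_fmon_top lam v hvwt hve hvspan w)
  set pick : V → List 𝓘 := fun m =>
    if hm : ∃ l : List 𝓘, m = Uact g V (fmon D l) v then hm.choose else [] with hpick
  have hpick_eq : ∀ m ∈ T, m = Uact g V (fmon D (pick m)) v := by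
    intro m hm
    have hmem : ∃ l : List 𝓘, m = Uact g V (fmon D l) v := hTsub hm
    simp only [hpick, dif_pos hmem]
    exact hmem.choose_spec
  obtain ⟨h, hsep⟩ := exists_sep
    ((T.image fun m => (lam + lwt D (pick m)) - μ).filter fun φ => φ ≠ 0)
    (fun φ hφ => (Finset.mem_filter.1 hφ).2)
  set Dop : Module.End ℂ V := LieModule.toEnd ℂ g V ((h : g)) with hDop
  have hDapp : ∀ m : V, Dop m = ⁅(h : g), m⁆ := fun m => by
    rw [hDop]; simp [LieModule.toEnd_apply_apply]
  have hwfun : ∀ m ∈ T, Dop m = (fun m => (lam + lwt D (pick m)) h) m • m := by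
    intro m hm
    have hmw : m ∈ wtSpace D.H V (lam + lwt D (pick m)) := by
      have h2 := act_wt V (isWt_fmon D (pick m)) hvwt
      rw [← hpick_eq m hm] at h2
      exact h2
    rw [hDapp]
    exact hmw h
  have hDw : Dop w = μ h • w := by rw [hDapp]; exact hwmem h
  have hspan2 := span_filter_eig Dop (fun m => (lam + lwt D (pick m)) h) (μ h)
    ((T.filter fun m => (fun m => (lam + lwt D (pick m)) h) m ≠ μ h).card) T le_rfl
    hwfun w hTw hDw
  have hexists : ∃ m ∈ T.filter fun m => (fun m => (lam + lwt D (pick m)) h) m = μ h,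
      m ≠ (0 : V) := by
    by_contra hcon
    push_neg at hcon
    have hw' : w ∈ Submodule.span ℂ ({0} : Set V) := by
      refine Submodule.span_mono ?_ hspan2
      intro z hz
      rw [Set.mem_singleton_iff]
      exact hcon z (Finset.mem_coe.1 hz)
    rw [Submodule.span_zero_singleton] at hw'
    exact hw0 (Submodule.mem_bot ℂ |>.1 hw')
  obtain ⟨m, hmfil, hm0⟩ := hexists
  obtain ⟨hmT, hmwh⟩ := Finset.mem_filter.1 hmfil
  have hmwt : lam + lwt D (pick m) = μ := by
    by_contra hne
    have hmem2 : (lam + lwt D (pick m)) - μ ∈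
        (T.image fun m => (lam + lwt D (pick m)) - μ).filter fun φ => φ ≠ 0 :=
      Finset.mem_filter.2 ⟨Finset.mem_image_of_mem _ hmT, sub_ne_zero.2 hne⟩
    have hs := hsep _ hmem2
    simp only [LinearMap.sub_apply, LinearMap.add_apply] at hs
    apply hs
    have : (lam + lwt D (pick m)) h = μ h := hmwh
    simp only [LinearMap.add_apply] at this
    rw [this, sub_self]
  have hlwt : lwt D (pick m) = -x := by
    have h1 : lwt D (pick m) = (lam + lwt D (pick m)) - lam := by abel
    rw [h1, hmwt, hμeq]
    abel
  have hcounts : ∀ j, (pick m).count j = nn j := by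
    apply counts_eq D
    have h1 : -∑ j : 𝓘, (((pick m).count j : ℂ)) • D.α j
        = -∑ j : 𝓘, ((nn j : ℂ)) • D.α j := by
      rw [← lwt_eq_neg_sum, hlwt, hxeq]
    exact neg_injective h1
  have hcom : ∀ i, i ∉ Jlam D lam →
      Commute (UniversalEnvelopingAlgebra.ι ℂ (D.e i)) (fmon D (pick m)) := by
    intro i hi
    apply commute_e_fmon D
    intro j hj hji
    have h0 : (pick m).count j = 0 := by rw [hcounts j, hji]; exact hnn i hi
    exact (List.count_eq_zero.1 h0) hj
  set l0 := (Finset.univ.filter fun i => i ∉ Jlam D lam).toList with hl0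
  have hl0nd : l0.Nodup := Finset.nodup_toList _
  have hl0mem : ∀ i ∈ l0, i ∉ Jlam D lam := by
    intro i hi
    exact (Finset.mem_filter.1 (Finset.mem_toList.1 hi)).2
  have hm0' : Uact g V (fmon D (pick m)) v ≠ 0 := by
    rw [← hpick_eq m hmT]; exact hm0
  have hfree := free_list hvwt hve c l0 hl0nd hl0mem (fmon D (pick m))
    (fun i hi => hcom i (hl0mem i hi)) hm0'
  rw [prod_pow_eq_fmon, ← fmon_append] at hfree
  have hwtL : Uact g V (fmon D (pick m ++ l0.flatMap fun i => List.replicate (c i) i)) v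
      ∈ wtSpace D.H V (lam + lwt D (pick m ++ l0.flatMap fun i => List.replicate (c i) i)) :=
    act_wt V (isWt_fmon D _) hvwt
  have hsum_list : (l0.map fun i => (c i : ℂ) • D.α i).sum
      = ∑ i ∈ Finset.univ.filter (fun i => i ∉ Jlam D lam), (c i : ℂ) • D.α i :=
    Finset.sum_map_toList _ _
  have hwt_eq : lam + lwt D (pick m ++ l0.flatMap fun i => List.replicate (c i) i)
      = μ - ∑ i ∈ Finset.univ.filter (fun i => i ∉ Jlam D lam), (c i : ℂ) • D.α i := by
    rw [lwt_append, lwt_flatMap, hsum_list, ← hmwt]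
    abel
  rw [hwt_eq] at hwtL
  exact (Submodule.ne_bot_iff _).2 ⟨_, hwtL, hfree⟩

end KM
end

section
/- Let A be an associative unital (not necessarily commutative) ring, let f_1, …, f_n, x ∈ A, and let b_1, …, b_n ∈ ℤ_{≥0}. Then f_n^{b_n} ⋯ f_1^{b_1} · x = Σ_{t_n=0}^{b_n} ⋯ Σ_{t_1=0}^{b_1} (∏_{j=1}^{n} C(b_j, t_j)) · (ad_{f_n}^{∘t_n} ∘ ⋯ ∘ ad_{f_1}^{∘t_1})(x) · f_n^{b_n−t_n} ⋯ f_1^{b_1−t_1}, where ad_f(y) := f·y − y·f, ad_f^{∘t} denotes the t-fold iterate, and C(b, t) is the binomial coefficient. -/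
open scoped BigOperators

namespace KM

/-- The commutator derivation `ad_f(y) = f·y − y·f` in an associative ring. -/
def adA {A : Type*} [Ring A] (a : A) : A → A := fun y => a * y - y * a

lemma adA_mul_right {A : Type*} [Ring A] {f c : A} (h : Commute f c) (y : A) :
    adA f (y * c) = adA f y * c := by
  simp only [adA, sub_mul, mul_assoc, h.eq]

lemma adA_iter_mul_right {A : Type*} [Ring A] {f c : A} (h : Commute f c) (t : ℕ) (y : A) :
    (adA f)^[t] (y * c) = (adA f)^[t] y * c := by
  induction t generalizing y with
  | zero => rfl
  | succ k ih => rw [Function.iterate_succ_apply, Function.iterate_succ_apply,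
                   adA_mul_right h, ih]

theorem single {A : Type*} [Ring A] (f x : A) (b : ℕ) :
    f ^ b * x = ∑ t ∈ Finset.range (b + 1), b.choose t • ((adA f)^[t] x * f ^ (b - t)) := by
  set L : AddMonoid.End A := AddMonoidHom.mulLeft f with hL
  set R : AddMonoid.End A := AddMonoidHom.mulRight f with hR
  have hLR : Commute L R := by
    refine AddMonoidHom.ext fun y => ?_
    show f * (y * f) = (f * y) * f
    rw [mul_assoc]
  have hD : Commute (L - R) R := hLR.sub_left (Commute.refl R)
  have key : L ^ b = ∑ t ∈ Finset.range (b + 1),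
      (L - R) ^ t * R ^ (b - t) * (b.choose t : AddMonoid.End A) := by
    have h1 : L = (L - R) + R := by abel
    conv_lhs => rw [h1, hD.add_pow]
  have hDc : ((L - R : AddMonoid.End A) : A → A) = adA f := rfl
  have hRpow : ∀ (m : ℕ) (y : A), (R ^ m) y = y * f ^ m := by
    intro m; induction m with
    | zero => intro y; simp [AddMonoid.End.one_apply]
    | succ k ih => intro y
                   rw [pow_succ']
                   show R ((R ^ k) y) = y * f ^ (k + 1)
                   rw [ih]
                   show y * f ^ k * f = _
                   rw [mul_assoc, ← pow_succ]
  have hLpow : ∀ (m : ℕ) (y : A), (L ^ m) y = f ^ m * y := by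
    intro m; induction m with
    | zero => intro y; simp [AddMonoid.End.one_apply]
    | succ k ih => intro y
                   rw [pow_succ']
                   show L ((L ^ k) y) = f ^ (k + 1) * y
                   rw [ih]
                   show f * (f ^ k * y) = _
                   rw [← mul_assoc, ← pow_succ']
  calc f ^ b * x = (L ^ b) x := (hLpow b x).symm
    _ = _ := by
      rw [key]
      rw [show ∀ (s : Finset ℕ) (g : ℕ → AddMonoid.End A) (y : A), (∑ i ∈ s, g i) y = ∑ i ∈ s, g i y
        from fun s g y => AddMonoidHom.finset_sum_apply (f := g) (s := s) (b := y)]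
      refine Finset.sum_congr rfl fun t ht => ?_
      have h2 : ((L - R) ^ t * R ^ (b - t) * (b.choose t : AddMonoid.End A)) x
          = ((L - R) ^ t) ((R ^ (b - t)) (((b.choose t : ℕ) : AddMonoid.End A) x)) := rfl
      rw [h2]
      have hcast : (((b.choose t : ℕ) : AddMonoid.End A)) x = b.choose t • x := by
        simp [AddMonoid.End.natCast_apply]
      rw [hcast, map_nsmul, map_nsmul]
      congr 1
      have h3 : ((L - R) ^ t) ((R ^ (b - t)) x)
          = ((L - R : AddMonoid.End A) : A → A)^[t] (x * f ^ (b - t)) := by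
        rw [hRpow, ← AddMonoid.End.coe_pow]
      rw [h3, hDc, adA_iter_mul_right ((Commute.refl f).pow_right _)]

lemma sum_piFinset_succ {M : Type*} [AddCommMonoid M] {n : ℕ} (S : Fin (n+1) → Finset ℕ)
    (g : (Fin (n+1) → ℕ) → M) :
    ∑ t ∈ Fintype.piFinset S, g t =
      ∑ a ∈ S 0, ∑ r ∈ Fintype.piFinset (fun i : Fin n => S i.succ), g (Fin.cons a r) := by
  have h := Finset.filter_piFinset_eq_map_consEquiv S (fun _ : (∀ i : Fin n, ℕ) => True)
  simp only [Finset.filter_true] at h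
  rw [h, Finset.sum_map, Finset.sum_product]
  rfl

/-- identity (5.3): in any associative unital ring `A`, for
`f_1, …, f_n, x ∈ A` and `b_1, …, b_n ∈ ℤ≥0`,
`f_n^{b_n} ⋯ f_1^{b_1} · x
  = Σ_{t_n=0}^{b_n} ⋯ Σ_{t_1=0}^{b_1} (∏_j C(b_j,t_j)) ·
      (ad_{f_n}^{t_n} ∘ ⋯ ∘ ad_{f_1}^{t_1})(x) · f_n^{b_n−t_n} ⋯ f_1^{b_1−t_1}`. -/
theorem ad_expansion_identity (A : Type*) [Ring A] (n : ℕ) (f : Fin n → A) (x : A)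
    (b : Fin n → ℕ) :
    ((List.ofFn fun j : Fin n => j).reverse.map fun j => f j ^ b j).prod * x =
      ∑ t ∈ Fintype.piFinset (fun j : Fin n => Finset.range (b j + 1)),
        (∏ j : Fin n, (b j).choose (t j)) •
          (((List.ofFn fun j : Fin n => j).foldl (fun y j => (adA (f j))^[t j] y) x) *
            ((List.ofFn fun j : Fin n => j).reverse.map fun j => f j ^ (b j - t j)).prod) := by
  induction n generalizing x with
  | zero => simp
  | succ n ih =>
    have hlist : (List.ofFn fun j : Fin (n+1) => j)
        = (0 : Fin (n+1)) :: List.map Fin.succ (List.ofFn fun i : Fin n => i) := by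
      rw [List.ofFn_succ, List.map_ofFn]; rfl
    set l : List (Fin n) := List.ofFn fun i : Fin n => i with hl
    have hprod : ∀ (g : Fin (n+1) → A),
        ((List.ofFn fun j : Fin (n+1) => j).reverse.map g).prod
          = (l.reverse.map fun i => g i.succ).prod * g 0 := by
      intro g
      rw [hlist, List.reverse_cons, List.map_append, List.prod_append,
        ← List.map_reverse, List.map_map]
      simp only [List.map_cons, List.map_nil, List.prod_cons, List.prod_nil, mul_one]
      rfl
    have hfold : ∀ (t : Fin (n+1) → ℕ) (y : A),
        (List.ofFn fun j : Fin (n+1) => j).foldl (fun y j => (adA (f j))^[t j] y) y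
          = l.foldl (fun y i => (adA (f i.succ))^[t i.succ] y) ((adA (f 0))^[t 0] y) := by
      intro t y
      rw [hlist, List.foldl_cons, List.foldl_map]
    rw [hprod, mul_assoc, single (f 0) x (b 0), Finset.mul_sum,
      sum_piFinset_succ]
    refine Finset.sum_congr rfl fun a ha => ?_
    rw [mul_smul_comm, ← mul_assoc,
      ih (fun i => f i.succ) ((adA (f 0))^[a] x) (fun i => b i.succ),
      Finset.sum_mul, Finset.smul_sum]
    refine Finset.sum_congr rfl fun r hr => ?_
    rw [smul_mul_assoc, smul_smul, Fin.prod_univ_succ]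
    simp only [Fin.cons_zero, Fin.cons_succ]
    rw [hfold, hprod]
    simp only [Fin.cons_zero, Fin.cons_succ, mul_assoc]


end KM
end
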